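/- For any commutative ring Λ there exists a commutative ring Λ' together with a faithfully flat ring homomorphism Λ → Λ' such that the group of units of Λ' is a divisible abelian group. -/

import Mathlib

set_option linter.unusedSectionVars false
set_option linter.unusedVariables false

open MvPolynomial

noncomputable section StepSec

variable (A : Type) [CommRing A] (m : ℕ)

/-- The ideal of relations `X a ^ m = a`. -/
def stepIdeal : Ideal (MvPolynomial A A) :=
  Ideal.span (Set.range fun a : A => X a ^ m - C a)

/-- Adjoin an `m`-th root of every element of `A`. -/
abbrev Step : Type := MvPolynomial A A ⧸ stepIdeal A m

instance : CommRing (Step A m) := Ideal.Quotient.commRing _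
instance : Algebra A (Step A m) := by unfold Step; infer_instance

/-- index of the monomial basis -/
def StepB : Type := {e : A →₀ ℕ // ∀ a, e a < m}

variable {A m}

def qf (e : A →₀ ℕ) : A →₀ ℕ := e.mapRange (· / m) (Nat.zero_div m)
def rf (e : A →₀ ℕ) : A →₀ ℕ := e.mapRange (· % m) (Nat.zero_mod m)
def cf (e : A →₀ ℕ) : A := (qf (m := m) e).prod fun a k => a ^ k

lemma rf_add_single (e : A →₀ ℕ) (a : A) :
    rf (m := m) (e + Finsupp.single a m) = rf (m := m) e := by
  ext j
  simp only [rf, Finsupp.mapRange_apply, Finsupp.add_apply, Finsupp.single_apply]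
  by_cases h : a = j <;> simp [h, Nat.add_mod_right]

lemma qf_add_single (hm : 0 < m) (e : A →₀ ℕ) (a : A) :
    qf (m := m) (e + Finsupp.single a m) = qf (m := m) e + Finsupp.single a 1 := by
  ext j
  simp only [qf, Finsupp.mapRange_apply, Finsupp.add_apply, Finsupp.single_apply]
  by_cases h : a = j <;> simp [h, Nat.add_div_right _ hm]

lemma cf_add_single (hm : 0 < m) (e : A →₀ ℕ) (a : A) :
    cf (m := m) (e + Finsupp.single a m) = a * cf (m := m) e := by
  rw [cf, qf_add_single hm, Finsupp.prod_add_index' (fun i => pow_zero i)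
    (fun i b c => pow_add i b c), Finsupp.prod_single_index (pow_zero a)]
  rw [pow_one, cf]; ring

lemma qf_of_reduced (e : A →₀ ℕ) (he : ∀ a, e a < m) : qf (m := m) e = 0 := by
  ext j; simp [qf, Finsupp.mapRange_apply, Nat.div_eq_of_lt (he j)]

lemma cf_of_reduced (e : A →₀ ℕ) (he : ∀ a, e a < m) : cf (m := m) e = 1 := by
  rw [cf, qf_of_reduced e he, Finsupp.prod_zero_index]

lemma rf_of_reduced (e : A →₀ ℕ) (he : ∀ a, e a < m) : rf (m := m) e = e := by
  ext j; simp [rf, Finsupp.mapRange_apply, Nat.mod_eq_of_lt (he j)]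

variable (A m) in
/-- The "reduction" linear map used to prove linear independence. -/
def stepPhi (hm : 0 < m) : MvPolynomial A A →ₗ[A] (StepB A m →₀ A) :=
  (basisMonomials A A).constr A fun e =>
    cf (m := m) e • Finsupp.single ⟨rf e, fun a => Nat.mod_lt _ hm⟩ 1

lemma stepPhi_monomial (hm : 0 < m) (e : A →₀ ℕ) (r : A) :
    stepPhi A m hm (monomial e r)
      = r • cf (m := m) e • Finsupp.single ⟨rf e, fun a => Nat.mod_lt _ hm⟩ 1 := by
  have : (monomial e r : MvPolynomial A A) = r • basisMonomials A A e := by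
    rw [coe_basisMonomials]; simp [smul_monomial]
  rw [this, map_smul, stepPhi, Module.Basis.constr_basis]

end StepSec

noncomputable section StepSec2
open MvPolynomial
variable {A : Type} [CommRing A] {m : ℕ}

lemma stepPhi_mul_gen (hm : 0 < m) (a : A) (p : MvPolynomial A A) :
    stepPhi A m hm (p * (X a ^ m - C a)) = 0 := by
  induction p using MvPolynomial.induction_on' with
  | monomial e r =>
    have h1 : monomial e r * X a ^ m = monomial (e + Finsupp.single a m) r := by
      rw [X_pow_eq_monomial, monomial_mul, mul_one]
    have h2 : monomial e r * C a = monomial e (a * r) := by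
      rw [C_apply, monomial_mul, add_zero, mul_comm]
    rw [mul_sub, h1, h2, map_sub, stepPhi_monomial, stepPhi_monomial]
    have h3 : (⟨rf (e + Finsupp.single a m), fun a => Nat.mod_lt _ hm⟩ : StepB A m)
        = ⟨rf e, fun a => Nat.mod_lt _ hm⟩ := Subtype.ext (rf_add_single e a)
    rw [h3, cf_add_single hm]
    rw [smul_smul, smul_smul, show r * (a * cf (m := m) e) = a * r * cf (m := m) e by ring, sub_self]
  | add p q hp hq => rw [add_mul, map_add, hp, hq, add_zero]

lemma stepPhi_ideal (hm : 0 < m) {x : MvPolynomial A A} (hx : x ∈ stepIdeal A m) :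
    stepPhi A m hm x = 0 := by
  have key : ∀ x ∈ stepIdeal A m, ∀ p : MvPolynomial A A, stepPhi A m hm (p * x) = 0 := by
    intro x hx
    refine Submodule.span_induction ?_ ?_ ?_ ?_ hx
    · rintro _ ⟨a, rfl⟩ p; exact stepPhi_mul_gen hm a p
    · intro p; rw [mul_zero, map_zero]
    · intro y z _ _ hy hz p; rw [mul_add, map_add, hy, hz, add_zero]
    · intro r y _ hy p
      rw [smul_eq_mul, ← mul_assoc, hy]
  simpa using key x hx 1

variable (A m) in
def stepB (e : StepB A m) : Step A m := Ideal.Quotient.mk _ (monomial e.1 1)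

lemma stepPhi_comb (hm : 0 < m) (l : StepB A m →₀ A) :
    stepPhi A m hm (Finsupp.linearCombination A
      (fun e : StepB A m => (monomial e.1 1 : MvPolynomial A A)) l) = l := by
  induction l using Finsupp.induction_linear with
  | zero => simp
  | add f g hf hg => rw [map_add, map_add, hf, hg]
  | single e c =>
    rw [Finsupp.linearCombination_single, map_smul, stepPhi_monomial,
      cf_of_reduced e.1 e.2, one_smul]
    have : (⟨rf e.1, fun a => Nat.mod_lt _ hm⟩ : StepB A m) = e :=
      Subtype.ext (rf_of_reduced e.1 e.2)
    rw [this, smul_smul, Finsupp.smul_single, mul_one, smul_eq_mul, mul_one]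

lemma stepB_li (hm : 0 < m) : LinearIndependent A (stepB A m) := by
  refine linearIndependent_iff.mpr ?_
  intro l hl
  have h1 := Finsupp.apply_linearCombination A
    (Ideal.Quotient.mkₐ A (stepIdeal A m)).toLinearMap
    (fun e : StepB A m => (monomial e.1 1 : MvPolynomial A A)) l
  have h2 : ((Ideal.Quotient.mkₐ A (stepIdeal A m)).toLinearMap ∘
      fun e : StepB A m => (monomial e.1 1 : MvPolynomial A A)) = stepB A m := rfl
  rw [h2] at h1
  replace h1 := h1.trans hl
  have h3 : (Finsupp.linearCombination A
      (fun e : StepB A m => (monomial e.1 1 : MvPolynomial A A)) l) ∈ stepIdeal A m := by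
    rw [← Ideal.Quotient.eq_zero_iff_mem, ← Ideal.Quotient.mkₐ_eq_mk A]
    exact h1
  have h4 := stepPhi_ideal hm h3
  rwa [stepPhi_comb hm] at h4

lemma qf_sum_succ (hm : 0 < m) {e e' : A →₀ ℕ} {a : A}
    (he : e = e' + Finsupp.single a m) :
    ((qf (m := m) e).sum fun _ k => k) = ((qf (m := m) e').sum fun _ k => k) + 1 := by
  subst he
  rw [qf_add_single hm, Finsupp.sum_add_index' (fun _ => rfl) (fun _ b c => rfl),
    Finsupp.sum_single_index rfl]

lemma mk_monomial_eq (hm : 0 < m) (e : A →₀ ℕ) :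
    Ideal.Quotient.mk (stepIdeal A m) (monomial e 1)
      = cf (m := m) e • Ideal.Quotient.mk (stepIdeal A m) (monomial (rf (m := m) e) 1) := by
  generalize h : ((qf (m := m) e).sum fun _ k => k) = n
  induction n using Nat.strong_induction_on generalizing e with
  | _ n ih =>
  by_cases hq : qf (m := m) e = 0
  · have hred : ∀ a, e a < m := by
      intro a
      have := DFunLike.congr_fun hq a
      simp only [qf, Finsupp.mapRange_apply, Finsupp.coe_zero, Pi.zero_apply] at this
      exact (Nat.div_eq_zero_iff_lt hm).mp this
    rw [cf_of_reduced e hred, rf_of_reduced e hred, one_smul]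
  · obtain ⟨a, ha⟩ : ∃ a, qf (m := m) e a ≠ 0 := by
      by_contra hall
      push_neg at hall
      exact hq (Finsupp.ext fun a => hall a)
    have ham : m ≤ e a := by
      by_contra hlt
      push_neg at hlt
      exact ha (by simp [qf, Finsupp.mapRange_apply, Nat.div_eq_of_lt hlt])
    set e' := e - Finsupp.single a m with he'def
    have he : e = e' + Finsupp.single a m := by
      ext j
      simp only [he'def, Finsupp.add_apply, Finsupp.tsub_apply, Finsupp.single_apply]
      by_cases hj : a = j
      · subst hj; simpa using (Nat.sub_add_cancel ham).symm
      · simp [hj]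
    have hn : n = ((qf (m := m) e').sum fun _ k => k) + 1 := by
      rw [← h, qf_sum_succ hm he]
    have hmul : (monomial e (1 : A)) = monomial e' 1 * X a ^ m := by
      rw [X_pow_eq_monomial, monomial_mul, mul_one, ← he]
    have hXC : Ideal.Quotient.mk (stepIdeal A m) (X a ^ m)
        = Ideal.Quotient.mk (stepIdeal A m) (C a) := by
      rw [Ideal.Quotient.eq]
      exact Ideal.subset_span ⟨a, rfl⟩
    have step1 : Ideal.Quotient.mk (stepIdeal A m) (monomial e 1)
        = a • Ideal.Quotient.mk (stepIdeal A m) (monomial e' 1) := by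
      rw [hmul, map_mul, hXC, ← map_mul, mul_comm, ← smul_eq_C_mul,
        ← (Ideal.Quotient.mkₐ_eq_mk A (stepIdeal A m)), map_smul]
    rw [step1, ih _ (by omega) e' rfl, he, cf_add_single hm, rf_add_single, smul_smul]

lemma stepB_span (hm : 0 < m) : ⊤ ≤ Submodule.span A (Set.range (stepB A m)) := by
  rintro x -
  obtain ⟨p, rfl⟩ := Ideal.Quotient.mk_surjective x
  induction p using MvPolynomial.induction_on' with
  | monomial e r =>
    have h1 : (monomial e r : MvPolynomial A A) = r • monomial e 1 := by
      rw [smul_monomial, smul_eq_mul, mul_one]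
    rw [h1, ← Ideal.Quotient.mkₐ_eq_mk A (stepIdeal A m), map_smul,
      Ideal.Quotient.mkₐ_eq_mk, mk_monomial_eq hm e, smul_smul]
    exact Submodule.smul_mem _ _ (Submodule.subset_span
      ⟨⟨rf e, fun a => Nat.mod_lt _ hm⟩, rfl⟩)
  | add p q hp hq => rw [map_add]; exact Submodule.add_mem _ hp hq

variable (A m) in
def stepBasis (hm : 0 < m) : Module.Basis (StepB A m) A (Step A m) :=
  Module.Basis.mk (stepB_li hm) (stepB_span hm)

lemma stepBasis_apply (hm : 0 < m) (e : StepB A m) : stepBasis A m hm e = stepB A m e :=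
  Module.Basis.mk_apply _ _ _

theorem stepBNonempty (hm : 0 < m) : Nonempty (StepB A m) := ⟨⟨0, fun _ => hm⟩⟩

lemma step_free (hm : 0 < m) : Module.Free A (Step A m) :=
  Module.Free.of_basis (stepBasis A m hm)

lemma step_nontrivial (hm : 0 < m) [Nontrivial A] : Nontrivial (Step A m) := by
  haveI := stepBNonempty (A := A) hm
  exact (stepBasis A m hm).repr.toEquiv.nontrivial

lemma step_faithfullyFlat (hm : 0 < m) [Nontrivial A] :
    Module.FaithfullyFlat A (Step A m) := by
  haveI := step_free (A := A) hm
  haveI := step_nontrivial (A := A) hm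
  infer_instance

lemma step_algebraMap (a : A) :
    algebraMap A (Step A m) a = Ideal.Quotient.mk (stepIdeal A m) (C a) := rfl

lemma step_root (a : A) :
    (Ideal.Quotient.mk (stepIdeal A m) (X a)) ^ m = algebraMap A (Step A m) a := by
  rw [step_algebraMap, ← map_pow, Ideal.Quotient.eq]
  exact Ideal.subset_span ⟨a, rfl⟩

lemma step_algebraMap_injective (hm : 0 < m) :
    Function.Injective (algebraMap A (Step A m)) := by
  intro a b hab
  have h0 : algebraMap A (Step A m) (a - b) = 0 := by rw [map_sub, hab, sub_self]
  have h1 : (C (a - b) : MvPolynomial A A) ∈ stepIdeal A m := by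
    rw [← Ideal.Quotient.eq_zero_iff_mem, ← step_algebraMap]
    exact h0
  have h2 := stepPhi_ideal hm h1
  rw [C_apply, stepPhi_monomial, cf_of_reduced 0 (fun _ => hm), one_smul] at h2
  change ((a - b) • Finsupp.single (⟨rf 0, fun _ => Nat.mod_lt _ hm⟩ : StepB A m) (1:A)) = 0 at h2
  rw [Finsupp.smul_single, smul_eq_mul, mul_one, Finsupp.single_eq_zero] at h2
  exact sub_eq_zero.mp h2

end StepSec2

noncomputable section Tower
open MvPolynomial

variable (Λ : Type) [CommRing Λ]

/-- The tower of rings: iteratively adjoin `(k+1)!`-th roots of everything. -/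
def TowerAux : ℕ → Σ R : Type, CommRing R
  | 0 => ⟨Λ, inferInstance⟩
  | k + 1 =>
    letI := (TowerAux k).2
    ⟨Step (TowerAux k).1 (k + 1).factorial, inferInstance⟩

@[reducible] def Gt (k : ℕ) : Type := (TowerAux Λ k).1

instance instGt (k : ℕ) : CommRing (Gt Λ k) := (TowerAux Λ k).2

/-- step map -/
def stepHom (k : ℕ) : Gt Λ k →+* Gt Λ (k + 1) :=
  algebraMap (Gt Λ k) (Step (Gt Λ k) (k + 1).factorial)

lemma stepHom_injective (k : ℕ) : Function.Injective (stepHom Λ k) :=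
  step_algebraMap_injective (k + 1).factorial_pos

lemma stepHom_root (k : ℕ) (a : Gt Λ k) :
    ∃ x : Gt Λ (k + 1), x ^ (k + 1).factorial = stepHom Λ k a :=
  ⟨Ideal.Quotient.mk _ (X a), step_root a⟩

def chain : ∀ {i j : ℕ}, i ≤ j → (Gt Λ i →+* Gt Λ j) := fun h =>
  Nat.leRecOn h (fun {k} g => (stepHom Λ k).comp g) (RingHom.id _)

lemma chain_self (i : ℕ) (h : i ≤ i) : chain Λ h = RingHom.id (Gt Λ i) :=
  Nat.leRecOn_self _

lemma chain_succ {i j : ℕ} (h : i ≤ j) (h2 : i ≤ j + 1) :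
    chain Λ h2 = (stepHom Λ j).comp (chain Λ h) :=
  Nat.leRecOn_succ h _

lemma chain_chain {i j k : ℕ} (hij : i ≤ j) (hjk : j ≤ k) (x : Gt Λ i) :
    chain Λ hjk (chain Λ hij x) = chain Λ (hij.trans hjk) x := by
  induction k, hjk using Nat.le_induction with
  | base => rw [chain_self]; rfl
  | succ k hjk ih =>
    rw [chain_succ Λ hjk (hjk.trans k.le_succ), chain_succ Λ (hij.trans hjk)
      ((hij.trans hjk).trans k.le_succ)]
    simp only [RingHom.comp_apply, ih]

lemma chain_injective {i j : ℕ} (h : i ≤ j) : Function.Injective (chain Λ h) := by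
  induction j, h using Nat.le_induction with
  | base => rw [chain_self]; exact fun a b => id
  | succ j hij ih =>
    rw [chain_succ Λ hij]
    exact (stepHom_injective Λ j).comp ih

instance towerDirected : DirectedSystem (fun k => Gt Λ k) (fun i j h => ⇑(chain Λ h)) where
  map_self := fun i x => by rw [chain_self]; rfl
  map_map := fun {i j k} hij hjk x => chain_chain Λ hij hjk x

end Tower

noncomputable section Limit
variable (Λ : Type) [CommRing Λ]

def Lim : Type :=
  Ring.DirectLimit (fun k => Gt Λ k) (fun i j h => ⇑(chain Λ h))

instance : CommRing (Lim Λ) :=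
  inferInstanceAs (CommRing (Ring.DirectLimit (fun k => Gt Λ k) (fun i j h => ⇑(chain Λ h))))

def ofk (k : ℕ) : Gt Λ k →+* Lim Λ :=
  Ring.DirectLimit.of (fun k => Gt Λ k) (fun i j h => ⇑(chain Λ h)) k

lemma ofk_f {i j : ℕ} (h : i ≤ j) (x : Gt Λ i) :
    ofk Λ j (chain Λ h x) = ofk Λ i x :=
  Ring.DirectLimit.of_f h x

lemma ofk_injective (k : ℕ) : Function.Injective (ofk Λ k) :=
  Ring.DirectLimit.of_injective (fun i j h => chain Λ h)
    (fun i j hij => chain_injective Λ hij) k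

lemma ofk_surj (z : Lim Λ) : ∃ k x, ofk Λ k x = z :=
  Ring.DirectLimit.exists_of z

def fhom : Λ →+* Lim Λ := ofk Λ 0

instance instAlgGt (k : ℕ) : Algebra Λ (Gt Λ k) := (chain Λ (Nat.zero_le k)).toAlgebra

lemma algebraMap_Gt (k : ℕ) :
    algebraMap Λ (Gt Λ k) = chain Λ (Nat.zero_le k) := rfl

instance instAlgLim : Algebra Λ (Lim Λ) := (fhom Λ).toAlgebra

lemma algebraMap_Lim : algebraMap Λ (Lim Λ) = fhom Λ := rfl

def chainA {i j : ℕ} (h : i ≤ j) : Gt Λ i →ₐ[Λ] Gt Λ j :=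
  { chain Λ h with commutes' := fun r => chain_chain Λ (Nat.zero_le i) h r }

def ofA (k : ℕ) : Gt Λ k →ₐ[Λ] Lim Λ :=
  { ofk Λ k with commutes' := fun r => ofk_f Λ (Nat.zero_le k) r }

end Limit

noncomputable section Stages
variable (Λ : Type) [CommRing Λ]

instance instAlgStepGt (k : ℕ) : Algebra (Gt Λ k) (Gt Λ (k + 1)) :=
  inferInstanceAs (Algebra (Gt Λ k) (Step (Gt Λ k) (k + 1).factorial))

instance instTowerStep (k : ℕ) : IsScalarTower Λ (Gt Λ k) (Gt Λ (k + 1)) :=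
  IsScalarTower.of_algebraMap_eq' (by
    rw [algebraMap_Gt, chain_succ Λ (Nat.zero_le k)]; rfl)

lemma Gt_nontrivial [Nontrivial Λ] (k : ℕ) : Nontrivial (Gt Λ k) :=
  ⟨⟨chain Λ (Nat.zero_le k) 0, chain Λ (Nat.zero_le k) 1,
    fun h => zero_ne_one (α := Λ) (chain_injective Λ (Nat.zero_le k) h)⟩⟩

lemma stage_ff [Nontrivial Λ] (k : ℕ) : Module.FaithfullyFlat Λ (Gt Λ k) := by
  induction k with
  | zero => exact Module.FaithfullyFlat.self Λ
  | succ k ih =>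
    haveI := ih
    haveI := Gt_nontrivial Λ k
    haveI : Module.FaithfullyFlat (Gt Λ k) (Gt Λ (k + 1)) :=
      step_faithfullyFlat (k + 1).factorial_pos
    exact Module.FaithfullyFlat.trans Λ (Gt Λ k) (Gt Λ (k + 1))

end Stages

noncomputable section LimFlat
variable (Λ : Type) [CommRing Λ]
open TensorProduct LinearMap

lemma ofA_comp_chainA {i j : ℕ} (h : i ≤ j) :
    (ofA Λ j).comp (chainA Λ h) = ofA Λ i :=
  AlgHom.ext fun x => ofk_f Λ h x

lemma lid_naturality {M N : Type} [AddCommGroup M] [Module Λ M] [AddCommGroup N]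
    [Module Λ N] (f : M →ₗ[Λ] N) (t : Λ ⊗[Λ] M) :
    TensorProduct.lid Λ N (lTensor Λ f t) = f (TensorProduct.lid Λ M t) := by
  induction t using TensorProduct.induction_on with
  | zero => simp
  | tmul r x => simp
  | add a b ha hb => simp [ha, hb, map_add]

lemma lim_surj_tensor (I : Ideal Λ) (z : I ⊗[Λ] Lim Λ) :
    ∃ (k : ℕ) (w : I ⊗[Λ] Gt Λ k), lTensor I (ofA Λ k).toLinearMap w = z := by
  induction z using TensorProduct.induction_on with
  | zero => exact ⟨0, 0, map_zero _⟩
  | tmul i y =>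
    obtain ⟨k, x, hx⟩ := ofk_surj Λ y
    exact ⟨k, i ⊗ₜ x, by rw [lTensor_tmul]; exact congrArg _ hx⟩
  | add y1 y2 ih1 ih2 =>
    obtain ⟨k1, w1, rfl⟩ := ih1
    obtain ⟨k2, w2, rfl⟩ := ih2
    refine ⟨max k1 k2,
      lTensor I (chainA Λ (le_max_left k1 k2)).toLinearMap w1 +
      lTensor I (chainA Λ (le_max_right k1 k2)).toLinearMap w2, ?_⟩
    rw [map_add, ← lTensor_comp_apply, ← lTensor_comp_apply,
      ← AlgHom.comp_toLinearMap, ← AlgHom.comp_toLinearMap,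
      ofA_comp_chainA, ofA_comp_chainA]

lemma lim_flat [Nontrivial Λ] : Module.Flat Λ (Lim Λ) := by
  rw [Module.Flat.iff_rTensor_injective']
  intro I
  have key : ∀ z : I ⊗[Λ] Lim Λ, rTensor (Lim Λ) I.subtype z = 0 → z = 0 := by
    intro z hz
    obtain ⟨k, w, rfl⟩ := lim_surj_tensor Λ I z
    haveI := stage_ff Λ k
    have sq : rTensor (Lim Λ) I.subtype (lTensor I (ofA Λ k).toLinearMap w)
        = lTensor Λ (ofA Λ k).toLinearMap (rTensor (Gt Λ k) I.subtype w) := by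
      rw [← comp_apply, ← comp_apply, rTensor_comp_lTensor, lTensor_comp_rTensor]
    rw [sq] at hz
    have h2 : (ofA Λ k).toLinearMap (TensorProduct.lid Λ (Gt Λ k)
        (rTensor (Gt Λ k) I.subtype w)) = 0 := by
      have h2' := congrArg (TensorProduct.lid Λ (Lim Λ)) hz
      rw [lid_naturality Λ ((ofA Λ k).toLinearMap)] at h2'
      simpa using h2'
    have h3 : TensorProduct.lid Λ (Gt Λ k) (rTensor (Gt Λ k) I.subtype w) = 0 :=
      ofk_injective Λ k (show ofk Λ k _ = ofk Λ k 0 by rw [map_zero]; exact h2)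
    have h4 : rTensor (Gt Λ k) I.subtype w = 0 :=
      (LinearEquiv.map_eq_zero_iff _).mp h3
    have h5 : w = 0 := by
      have hinj := (Module.Flat.iff_rTensor_injective' (R := Λ) (M := Gt Λ k)).mp inferInstance I
      exact hinj (by rw [h4, map_zero])
    rw [h5, map_zero]
  intro a b hab
  have : a - b = 0 := key _ (by rw [map_sub, hab, sub_self])
  exact sub_eq_zero.mp this

lemma lim_stage_smul_top (m : Ideal Λ) (x : Lim Λ)
    (hx : x ∈ m • (⊤ : Submodule Λ (Lim Λ))) :
    ∃ k w, w ∈ m • (⊤ : Submodule Λ (Gt Λ k)) ∧ ofk Λ k w = x := by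
  refine Submodule.smul_induction_on hx ?_ ?_
  · intro r hr n _
    obtain ⟨k, a, rfl⟩ := ofk_surj Λ n
    refine ⟨k, r • a, Submodule.smul_mem_smul hr Submodule.mem_top, ?_⟩
    exact map_smul (ofA Λ k) r a
  · rintro x y ⟨k1, w1, hw1, rfl⟩ ⟨k2, w2, hw2, rfl⟩
    have push1 : Submodule.map (chainA Λ (le_max_left k1 k2)).toLinearMap (m • ⊤)
        ≤ m • (⊤ : Submodule Λ (Gt Λ (max k1 k2))) := by
      rw [Submodule.map_smul'']
      exact smul_mono_right m le_top
    have push2 : Submodule.map (chainA Λ (le_max_right k1 k2)).toLinearMap (m • ⊤)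
        ≤ m • (⊤ : Submodule Λ (Gt Λ (max k1 k2))) := by
      rw [Submodule.map_smul'']
      exact smul_mono_right m le_top
    refine ⟨max k1 k2,
      chainA Λ (le_max_left k1 k2) w1 + chainA Λ (le_max_right k1 k2) w2,
      Submodule.add_mem _ (push1 ⟨w1, hw1, rfl⟩) (push2 ⟨w2, hw2, rfl⟩), ?_⟩
    · rw [map_add]
      show ofk Λ _ (chain Λ _ w1) + ofk Λ _ (chain Λ _ w2) = _
      rw [ofk_f, ofk_f]

lemma lim_ff [Nontrivial Λ] : Module.FaithfullyFlat Λ (Lim Λ) := by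
  refine { toFlat := lim_flat Λ, submodule_ne_top := ?_ }
  intro m hm htop
  have h1 : (1 : Lim Λ) ∈ m • (⊤ : Submodule Λ (Lim Λ)) := by
    rw [htop]; exact Submodule.mem_top
  obtain ⟨k, w, hw, hw1⟩ := lim_stage_smul_top Λ m 1 h1
  have hwone : w = 1 := ofk_injective Λ k (by rw [hw1, map_one])
  have hstage : m • (⊤ : Submodule Λ (Gt Λ k)) = ⊤ := by
    rw [eq_top_iff]
    intro y _
    have : Submodule.map (LinearMap.mulLeft Λ y) (m • ⊤)
        ≤ m • (⊤ : Submodule Λ (Gt Λ k)) := by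
      rw [Submodule.map_smul'']
      exact smul_mono_right m le_top
    have hy : y = LinearMap.mulLeft Λ y w := by rw [hwone]; simp [LinearMap.mulLeft]
    rw [hy]
    exact this ⟨w, hw, rfl⟩
  exact (stage_ff Λ k).submodule_ne_top hm hstage

lemma lim_root (z : Lim Λ) (n : ℕ) (hn : 0 < n) : ∃ x : Lim Λ, x ^ n = z := by
  obtain ⟨k, a, rfl⟩ := ofk_surj Λ z
  have hkj : k ≤ max k n := le_max_left _ _
  set j := max k n with hj
  set b := chain Λ hkj a with hb
  obtain ⟨x, hx⟩ := stepHom_root Λ j b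
  have hdvd : n ∣ (j + 1).factorial :=
    Nat.dvd_factorial hn ((le_max_right k n).trans (Nat.le_succ j))
  obtain ⟨c, hc⟩ := hdvd
  refine ⟨ofk Λ (j + 1) x ^ c, ?_⟩
  rw [← pow_mul, mul_comm c n, ← hc, ← map_pow, hx]
  have hstep : stepHom Λ j b = chain Λ (Nat.le_succ j) b := by
    rw [chain_succ Λ (le_refl j) (Nat.le_succ j), chain_self]; rfl
  rw [hstep, ofk_f, hb, ofk_f]

end LimFlat

/-- For any commutative ring `Λ` there exists a commutative ring `Λ'` together
with a faithfully flat ring homomorphism `Λ → Λ'` such that the group of units of `Λ'` is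
divisible. -/
theorem stmt_0 (Λ : Type) [CommRing Λ] :
    ∃ (Λ' : Type) (_ : CommRing Λ') (f : Λ →+* Λ'),
      (letI : Module Λ Λ' := f.toModule
       Module.FaithfullyFlat Λ Λ') ∧
      ∀ (u : Λ'ˣ) (n : ℕ), 0 < n → ∃ v : Λ'ˣ, v ^ n = u := by
  by_cases htriv : Subsingleton Λ
  · refine ⟨Λ, inferInstance, RingHom.id Λ, ?_, ?_⟩
    · exact Module.FaithfullyFlat.self Λ
    · intro u n _
      exact ⟨u, Units.ext (Subsingleton.elim _ _)⟩
  · haveI : Nontrivial Λ := not_subsingleton_iff_nontrivial.mp htriv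
    refine ⟨Lim Λ, inferInstance, fhom Λ, ?_, ?_⟩
    · exact lim_ff Λ
    · intro u n hn
      obtain ⟨x, hx⟩ := lim_root Λ (↑u) n hn
      have hx1 : x * x ^ (n - 1) = (u : Lim Λ) := by
        rw [← pow_succ']
        rw [show n - 1 + 1 = n by omega, hx]
      refine ⟨⟨x, x ^ (n - 1) * ↑u⁻¹, ?_, ?_⟩, ?_⟩
      · rw [← mul_assoc, hx1, Units.mul_inv]
      · rw [mul_comm _ x, ← mul_assoc, hx1, Units.mul_inv]
      · exact Units.ext (by simpa using hx)
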